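/- Let A be a non-unital semisimple Banach algebra with the spectral extension property (every submultiplicative algebra norm on A is a Q-norm). Then A has the P-property: every nonzero closed (two-sided) ideal I of A contains an element a with r_{pA}(a) > 0, where r_{pA}(a) = inf{|a| : |·| is a submultiplicative algebra norm on A} is the permanent radius. -/

import Mathlib

/-- A submultiplicative algebra norm on a (possibly non-unital) complex algebra. -/
structure AlgNorm (A : Type*) [NonUnitalRing A] [Module ℂ A]
    extends RingNorm A where
  smul' : ∀ (c : ℂ) (x : A), toFun (c • x) = ‖c‖ * toFun x

/-- The spectral radius in a non-unital complex algebra, via the quasispectrum. -/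
noncomputable def quasiRadius {A : Type*} [NonUnitalRing A] [Module ℂ A]
    [IsScalarTower ℂ A A] [SMulCommClass ℂ A A] (a : A) : ENNReal :=
  ⨆ k ∈ quasispectrum ℂ a, (‖k‖₊ : ENNReal)

/-- The permanent radius of `a`: the infimum of `|a|` over all algebra norms. -/
noncomputable def permRadius {A : Type*} [NonUnitalRing A] [Module ℂ A]
    (a : A) : ℝ :=
  sInf {r : ℝ | ∃ p : AlgNorm A, r = p.toRingNorm a}

/-- The ambient norm of a non-unital normed ring is an algebra norm. -/
noncomputable def ambientAlgNorm (A : Type*) [NonUnitalNormedRing A] [NormedSpace ℂ A] :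
    AlgNorm A where
  toFun := norm
  map_zero' := norm_zero
  add_le' := norm_add_le
  neg' := norm_neg
  mul_le' := norm_mul_le
  eq_zero_of_map_eq_zero' := fun x h => norm_eq_zero.mp h
  smul' := fun c x => norm_smul c x

lemma permRadius_aux {A : Type*} [NonUnitalNormedRing A] [NormedSpace ℂ A]
    [IsScalarTower ℂ A A] [SMulCommClass ℂ A A]
    (hSEP : ∀ p : AlgNorm A, ∀ a : A,
      quasiRadius a ≤ ENNReal.ofReal (p.toRingNorm a))
    (c : A) (hc : permRadius c ≤ 0) : quasiRadius c = 0 := by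
  have hne : {r : ℝ | ∃ p : AlgNorm A, r = p.toRingNorm c}.Nonempty :=
    ⟨(ambientAlgNorm A).toRingNorm c, ambientAlgNorm A, rfl⟩
  refine le_antisymm ?_ zero_le
  refine ENNReal.le_of_forall_pos_le_add fun ε hε _ => ?_
  have : sInf {r : ℝ | ∃ p : AlgNorm A, r = p.toRingNorm c} < ε := by
    calc sInf _ ≤ 0 := hc
    _ < ε := by exact_mod_cast hε
  obtain ⟨r, ⟨p, rfl⟩, hr⟩ := exists_lt_of_csInf_lt hne this
  calc quasiRadius c ≤ ENNReal.ofReal (p.toRingNorm c) := hSEP p c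
  _ ≤ ENNReal.ofReal ε := ENNReal.ofReal_le_ofReal hr.le
  _ = 0 + ε := by simp [ENNReal.ofReal_coe_nnreal]

/-- A non-unital semisimple Banach algebra with the spectral extension property has the
P-property: every nonzero closed two-sided ideal contains an element of strictly
positive permanent radius. -/
theorem pProperty_of_SEP
    (A : Type*) [NonUnitalNormedRing A] [NormedSpace ℂ A]
    [IsScalarTower ℂ A A] [SMulCommClass ℂ A A] [CompleteSpace A]
    (hA : ¬ ∃ e : A, ∀ x : A, e * x = x ∧ x * e = x)
    (hss : ∀ a : A, (∀ x : A, quasiRadius (x * a) = 0) → a = 0)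
    (hSEP : ∀ p : AlgNorm A, ∀ a : A,
      quasiRadius a ≤ ENNReal.ofReal (p.toRingNorm a)) :
    ∀ I : TwoSidedIdeal A, IsClosed (I : Set A) → (∃ b : A, b ∈ I ∧ b ≠ 0) →
      ∃ a : A, a ∈ I ∧ 0 < permRadius a := by
  intro I _hI ⟨b, hbI, hb0⟩
  by_contra h
  push_neg at h
  refine hb0 (hss b fun x => ?_)
  have hx : x * b ∈ I := I.mul_mem_left x b hbI
  exact permRadius_aux hSEP (x * b) (h (x * b) hx)
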